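/- Let X ⊆ 2^ω be a subgroup of (2^ω, +) that is topologically dense in 2^ω. Then X has strong measure zero if and only if every selector of the cosets of X — that is, every set S ⊆ 2^ω that meets each coset y + X in exactly one point — does not have the Baire property. -/

import Mathlib

open MeasureTheory Set Pointwise
open scoped ENNReal

/-- The Cantor space `2^ω = ℕ → ZMod 2`, with coordinatewise addition mod 2. -/
abbrev Cantor : Type := ℕ → ZMod 2

open Classical in
/-- The standard metric on the Cantor space: `d(x,y) = 2^{-min{n : x n ≠ y n}}`,
and `d(x,x) = 0`. -/
noncomputable def cdist (x y : Cantor) : ℝ :=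
  if h : x = y then 0 else (2 : ℝ) ^ (-(Nat.find (Function.ne_iff.mp h) : ℤ))

/-- The diameter of a subset of the Cantor space with respect to `cdist`. -/
noncomputable def cdiam (s : Set Cantor) : ℝ := sSup (Set.image2 cdist s s)

/-- `X ⊆ 2^ω` has strong measure zero if for every sequence `(εₙ)` of positive reals
there are sets `Xₙ` with `X = ⋃ₙ Xₙ` and `diam Xₙ < εₙ`. -/
def StrongMeasureZero (X : Set Cantor) : Prop :=
  ∀ ε : ℕ → ℝ, (∀ n, 0 < ε n) →
    ∃ Y : ℕ → Set Cantor, X = ⋃ n, Y n ∧ ∀ n, cdiam (Y n) < ε n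

/-- A set has the Baire property if it differs from an open set by a meager set. -/
def HasBaireProperty (S : Set Cantor) : Prop :=
  ∃ U : Set Cantor, IsOpen U ∧ IsMeagre (symmDiff S U)

def cyl (σ : Cantor) (n : ℕ) : Set Cantor := {x | ∀ i < n, x i = σ i}

lemma zmod2_add_self : ∀ a : ZMod 2, a + a = 0 := by decide

lemma cantor_add_self (x : Cantor) : x + x = 0 := by
  funext i; exact zmod2_add_self (x i)

lemma cantor_neg (x : Cantor) : -x = x := by
  rw [neg_eq_iff_add_eq_zero]; exact cantor_add_self x

lemma cdist_nonneg (x y : Cantor) : 0 ≤ cdist x y := by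
  unfold cdist; split
  · exact le_refl 0
  · positivity

lemma cdist_le_one (x y : Cantor) : cdist x y ≤ 1 := by
  unfold cdist; split
  · norm_num
  · apply zpow_le_one_of_nonpos₀ (by norm_num)
    simp

lemma cdist_lt_agree {x y : Cantor} {n : ℕ} (h : cdist x y < (2:ℝ) ^ (-(n:ℤ))) :
    ∀ i < n, x i = y i := by
  intro i hi
  unfold cdist at h
  split at h
  · next he => rw [he]
  · next he =>
    have hd : (n:ℤ) < (Nat.find (Function.ne_iff.mp he) : ℤ) := by
      by_contra hc
      push_neg at hc
      have := zpow_le_zpow_right₀ (a := (2:ℝ)) (by norm_num) (neg_le_neg hc)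
      linarith
    have hi' : i < Nat.find (Function.ne_iff.mp he) := by
      have : i < n := hi
      omega
    by_contra hne
    exact (Nat.find_min (Function.ne_iff.mp he) hi') hne

lemma bddAbove_cdist (s : Set Cantor) : BddAbove (Set.image2 cdist s s) := by
  refine ⟨1, ?_⟩
  rintro r ⟨x, hx, y, hy, rfl⟩
  exact cdist_le_one x y

lemma cdist_le_cdiam {s : Set Cantor} {x y : Cantor} (hx : x ∈ s) (hy : y ∈ s) :
    cdist x y ≤ cdiam s :=
  le_csSup (bddAbove_cdist s) (mem_image2_of_mem hx hy)

lemma cdist_le_of_agree {x y : Cantor} {n : ℕ} (h : ∀ i < n, x i = y i) :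
    cdist x y ≤ (2:ℝ) ^ (-(n:ℤ)) := by
  unfold cdist; split
  · positivity
  · next he =>
    apply zpow_le_zpow_right₀ (a := (2:ℝ)) (by norm_num)
    apply neg_le_neg
    have : n ≤ Nat.find (Function.ne_iff.mp he) := by
      by_contra hc
      push_neg at hc
      exact (Nat.find_spec (Function.ne_iff.mp he)) (h _ hc)
    exact_mod_cast this

lemma cdiam_le_of_subset_cyl {s : Set Cantor} {σ : Cantor} {n : ℕ} (h : s ⊆ cyl σ n) :
    cdiam s ≤ (2:ℝ) ^ (-(n:ℤ)) := by
  apply Real.sSup_le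
  · rintro r ⟨x, hx, y, hy, rfl⟩
    exact cdist_le_of_agree fun i hi => (h hx i hi).trans (h hy i hi).symm
  · positivity

lemma isOpen_cyl (σ : Cantor) (n : ℕ) : IsOpen (cyl σ n) := by
  have : cyl σ n = ⋂ i ∈ Finset.range n, (fun x : Cantor => x i) ⁻¹' {σ i} := by
    ext x; simp [cyl]
  rw [this]
  exact isOpen_biInter_finset fun i _ => (continuous_apply i).isOpen_preimage _ (isOpen_discrete _)

lemma isClosed_cyl (σ : Cantor) (n : ℕ) : IsClosed (cyl σ n) := by
  have : cyl σ n = ⋂ i ∈ Finset.range n, (fun x : Cantor => x i) ⁻¹' {σ i} := by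
    ext x; simp [cyl]
  rw [this]
  exact isClosed_biInter fun i _ => IsClosed.preimage (continuous_apply i) (isClosed_discrete _)

lemma mem_cyl_self (σ : Cantor) (n : ℕ) : σ ∈ cyl σ n := fun _ _ => rfl

lemma cyl_mono (σ : Cantor) {m n : ℕ} (h : m ≤ n) : cyl σ n ⊆ cyl σ m :=
  fun _ hx i hi => hx i (lt_of_lt_of_le hi h)

/-- every open set around a point contains a cylinder -/
lemma exists_cyl_subset {U : Set Cantor} (hU : IsOpen U) {u : Cantor} (hu : u ∈ U) :
    ∃ n, cyl u n ⊆ U := by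
  obtain ⟨I, v, hI, hsub⟩ := isOpen_pi_iff.mp hU u hu
  classical
  refine ⟨(I.sup id) + 1, fun x hx => hsub ?_⟩
  intro i hi
  have : x i = u i := hx i (Nat.lt_succ_of_le (Finset.le_sup (f := id) hi))
  rw [this]; exact (hI i hi).2

/-- extension into the complement of a closed nowhere dense set -/
lemma exists_ext (F : Set Cantor) (hF : IsClosed F) (hnwd : interior F = ∅)
    (σ : Cantor) (n : ℕ) :
    ∃ (τ : Cantor) (M : ℕ), n ≤ M ∧ (∀ i < n, τ i = σ i) ∧ cyl τ M ∩ F = ∅ := by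
  have hopen : IsOpen (cyl σ n \ F) := (isOpen_cyl σ n).sdiff hF
  have hne : (cyl σ n \ F).Nonempty := by
    by_contra h
    rw [Set.not_nonempty_iff_eq_empty, Set.diff_eq_empty] at h
    have : cyl σ n ⊆ interior F := interior_maximal h (isOpen_cyl σ n)
    rw [hnwd] at this
    exact Set.notMem_empty σ (this (mem_cyl_self σ n))
  obtain ⟨u, hu⟩ := hne
  obtain ⟨m, hm⟩ := exists_cyl_subset hopen hu
  refine ⟨u, max m n, le_max_right _ _, fun i hi => hu.1 i hi, ?_⟩
  rw [Set.eq_empty_iff_forall_notMem]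
  intro x hx
  exact (hm (fun i hi => hx.1 i (lt_of_lt_of_le hi (le_max_left _ _)))).2 hx.2

lemma cyl_nonempty (σ : Cantor) (n : ℕ) : (cyl σ n).Nonempty := ⟨σ, mem_cyl_self σ n⟩

/-- nonempty open sets are not meagre (Baire) -/
lemma not_isMeagre_of_isOpen' {U : Set Cantor} (hU : IsOpen U) (hne : U.Nonempty) :
    ¬ IsMeagre U := by
  intro h
  have : Dense Uᶜ := dense_of_mem_residual h
  obtain ⟨u, hu⟩ := hne
  obtain ⟨v, hv, hvc⟩ := this.exists_mem_open hU ⟨u, hu⟩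
  exact hv hvc

lemma exists_pow_lt' {ε : ℝ} (hε : 0 < ε) : ∃ n : ℕ, (2:ℝ) ^ (-(n:ℤ)) < ε := by
  obtain ⟨n, hn⟩ := exists_pow_lt_of_lt_one hε (by norm_num : (1/2 : ℝ) < 1)
  refine ⟨n, ?_⟩
  have : (2:ℝ) ^ (-(n:ℤ)) = (1/2:ℝ) ^ n := by
    rw [zpow_neg, zpow_natCast, ← inv_pow]; norm_num
  rw [this]; exact hn

lemma smz_to_cylCover {X : Set Cantor} (h : StrongMeasureZero X) (m : ℕ → ℕ) :
    ∃ σ : ℕ → Cantor, X ⊆ ⋃ k, cyl (σ k) (m k) := by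
  classical
  obtain ⟨Y, hXY, hd⟩ := h (fun k => (2:ℝ) ^ (-(m k : ℤ))) (fun k => by positivity)
  refine ⟨fun k => if hk : (Y k).Nonempty then hk.choose else 0, ?_⟩
  intro x hx
  rw [hXY] at hx
  obtain ⟨k, hk⟩ := Set.mem_iUnion.mp hx
  refine Set.mem_iUnion.mpr ⟨k, ?_⟩
  have hne : (Y k).Nonempty := ⟨x, hk⟩
  simp only [dif_pos hne]
  exact fun i hi =>
    cdist_lt_agree (lt_of_le_of_lt (cdist_le_cdiam hk hne.choose_spec) (hd k)) i hi

lemma cdiam_empty : cdiam (∅ : Set Cantor) = 0 := by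
  simp [cdiam, Real.sSup_empty]

lemma cylCover_to_smz {X : Set Cantor}
    (h : ∀ m : ℕ → ℕ, ∃ σ : ℕ → Cantor, X ⊆ ⋃ k, cyl (σ k) (m k)) :
    StrongMeasureZero X := by
  intro ε hε
  choose m hm using fun k => exists_pow_lt' (hε k)
  obtain ⟨σ, hσ⟩ := h m
  refine ⟨fun k => X ∩ cyl (σ k) (m k), ?_, ?_⟩
  · apply Set.Subset.antisymm
    · intro x hx
      obtain ⟨k, hk⟩ := Set.mem_iUnion.mp (hσ hx)
      exact Set.mem_iUnion.mpr ⟨k, hx, hk⟩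
    · exact Set.iUnion_subset fun k => Set.inter_subset_left
  · intro k
    exact lt_of_le_of_lt (cdiam_le_of_subset_cyl Set.inter_subset_right) (hm k)

noncomputable instance : Encodable (ZMod 2) := Fintype.toEncodable _

/-- iterated block boundaries -/
def blockFun (g : ℕ → ℕ → ℕ) : ℕ → ℕ
  | 0 => 0
  | j + 1 => max (blockFun g j + 1) (g j (blockFun g j))

lemma blockFun_lt (g : ℕ → ℕ → ℕ) (j : ℕ) : blockFun g j < blockFun g (j + 1) :=
  lt_of_lt_of_le (Nat.lt_succ_self _) (le_max_left _ _)

lemma le_blockFun (g : ℕ → ℕ → ℕ) (j : ℕ) : g j (blockFun g j) ≤ blockFun g (j + 1) :=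
  le_max_right _ _

lemma blockFun_le_self (g : ℕ → ℕ → ℕ) (j : ℕ) : j ≤ blockFun g j := by
  induction j with
  | zero => exact Nat.zero_le _
  | succ j ih => exact lt_of_le_of_lt ih (blockFun_lt g j)

/-- Combinatorial lemma: if for every interval partition there is a `z` such that every
`x ∈ X` agrees with `z` on some block, then `X` has strong measure zero. -/
lemma smz_of_blocks {X : Set Cantor}
    (h : ∀ b : ℕ → ℕ, (∀ j, b j < b (j + 1)) →
      ∃ z : Cantor, ∀ x ∈ X, ∃ j, ∀ i, b j ≤ i → i < b (j + 1) → x i = z i) :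
    StrongMeasureZero X := by
  classical
  apply cylCover_to_smz
  intro m
  set g : ℕ → ℕ → ℕ := fun j L =>
    (Finset.univ : Finset (Fin L → ZMod 2)).sup
      (fun s => m (Nat.pair j (Encodable.encode (List.ofFn s)))) with hg
  set b : ℕ → ℕ := blockFun g with hbdef
  obtain ⟨z, hz⟩ := h b (blockFun_lt g)
  have hz' : ∀ x : Cantor, ∃ j, x ∈ X → ∀ i, b j ≤ i → i < b (j + 1) → x i = z i := by
    intro x
    by_cases hx : x ∈ X
    · obtain ⟨j, hj⟩ := hz x hx
      exact ⟨j, fun _ => hj⟩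
    · exact ⟨0, fun h => absurd h hx⟩
  choose jf hjf using hz'
  set kf : Cantor → ℕ := fun x =>
    Nat.pair (jf x) (Encodable.encode (List.ofFn (fun i : Fin (b (jf x)) => x i))) with hkf
  set A : ℕ → Set Cantor := fun k => {x ∈ X | kf x = k} with hA
  refine ⟨fun k => if hk : (A k).Nonempty then hk.choose else z, ?_⟩
  intro x hx
  refine Set.mem_iUnion.mpr ⟨kf x, ?_⟩
  have hxA : x ∈ A (kf x) := ⟨hx, rfl⟩
  have hne : (A (kf x)).Nonempty := ⟨x, hxA⟩
  simp only [dif_pos hne]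
  set r := hne.choose with hr
  have hrA : r ∈ A (kf x) := hne.choose_spec
  obtain ⟨hrX, hrk⟩ := hrA
  have hpair := Nat.pair_eq_pair.mp hrk
  obtain ⟨hj1, hj2⟩ := hpair
  have hlists : List.ofFn (fun i : Fin (b (jf r)) => r i)
      = List.ofFn (fun i : Fin (b (jf x)) => x i) := Encodable.encode_injective hj2
  have hagree : ∀ i < b (jf x), r i = x i := by
    intro i hi
    have hlen : b (jf r) = b (jf x) := by rw [hj1]
    have h1 : (List.ofFn (fun i : Fin (b (jf r)) => r i))[i]?
        = some (r i) := by
      rw [List.getElem?_ofFn]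
      simp [List.ofFnNthVal, hlen, hi]
    have h2 : (List.ofFn (fun i : Fin (b (jf x)) => x i))[i]?
        = some (x i) := by
      rw [List.getElem?_ofFn]
      simp [List.ofFnNthVal, hi]
    rw [hlists, h2] at h1
    exact (Option.some_injective _ h1.symm)
  have hmk : m (kf x) ≤ b (jf x + 1) := by
    have h1 : m (kf x) ≤ g (jf x) (b (jf x)) := by
      have := Finset.le_sup (f := fun s : Fin (b (jf x)) → ZMod 2 =>
        m (Nat.pair (jf x) (Encodable.encode (List.ofFn s))))
        (Finset.mem_univ (fun i : Fin (b (jf x)) => x i))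
      simpa [hg, hkf] using this
    exact le_trans h1 (le_blockFun g (jf x))
  intro i hi
  have hib : i < b (jf x + 1) := lt_of_lt_of_le hi hmk
  by_cases hij : i < b (jf x)
  · exact (hagree i hij).symm
  · have hx1 : x i = z i := hjf x hx i (Nat.le_of_not_lt hij) hib
    have hr1 : r i = z i := by
      have hij2 : ¬ i < b (jf r) := by rw [hj1]; exact hij
      have hib2 : i < b (jf r + 1) := by rw [hj1]; exact hib
      exact hjf r hrX i (Nat.le_of_not_lt hij2) hib2
    rw [hx1, hr1]

lemma blockFun_mono (g : ℕ → ℕ → ℕ) : Monotone (blockFun g) :=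
  monotone_nat_of_le_succ fun j => le_of_lt (blockFun_lt g j)

lemma add2_cancel (a b : ZMod 2) : a + b + b = a := by
  rw [add_assoc, zmod2_add_self, add_zero]

/-- The diagonal sequence of finite approximations. -/
def diagSeq (τ : ℕ → Cantor → ℕ → Cantor) (B : ℕ → ℕ) (σ : ℕ → ℕ → Cantor) : ℕ → Cantor
  | 0 => 0
  | j + 1 => fun i => if i < B (j + 1) then
      τ (Nat.unpair j).1
        (fun i' => if i' < B j then
            diagSeq τ B σ j i' + σ (Nat.unpair j).1 (Nat.unpair j).2 i' else 0)
        (B j) i + σ (Nat.unpair j).1 (Nat.unpair j).2 i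
    else 0

/-- GMS easy direction: a smz set can be translated off any countable union of
closed nowhere dense sets. -/
lemma exists_avoid {X : Set Cantor} (hX : StrongMeasureZero X) (F : ℕ → Set Cantor)
    (hFc : ∀ n, IsClosed (F n)) (hFn : ∀ n, interior (F n) = ∅) :
    ∃ z : Cantor, ∀ x ∈ X, ∀ n, z + x ∉ F n := by
  classical
  choose τf Mf h1 h2 h3 using fun (n : ℕ) (s : Cantor) (L : ℕ) =>
    exists_ext (F n) (hFc n) (hFn n) s L
  set g : ℕ → ℕ → ℕ := fun j L =>
    (Finset.univ : Finset (Fin L → ZMod 2)).sup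
      (fun s => Mf (Nat.unpair j).1 (fun i => if h : i < L then s ⟨i, h⟩ else 0) L) with hg
  set B : ℕ → ℕ := blockFun g with hB
  -- bound: for truncated strings t, Mf n t (B j) ≤ B (j+1) when n = (unpair j).1
  have hbound : ∀ j (t : Cantor), (∀ i, ¬ i < B j → t i = 0) →
      Mf (Nat.unpair j).1 t (B j) ≤ B (j + 1) := by
    intro j t ht
    have hteq : t = fun i => if h : i < B j then (fun i' : Fin (B j) => t i') ⟨i, h⟩ else 0 := by
      funext i
      by_cases h : i < B j
      · simp [h]
      · simp [h, ht i h]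
    calc Mf (Nat.unpair j).1 t (B j)
        = Mf (Nat.unpair j).1 (fun i => if h : i < B j then
            (fun i' : Fin (B j) => t i') ⟨i, h⟩ else 0) (B j) := by rw [← hteq]
      _ ≤ g j (B j) := Finset.le_sup
          (f := fun s : Fin (B j) → ZMod 2 =>
            Mf (Nat.unpair j).1 (fun i => if h : i < B j then s ⟨i, h⟩ else 0) (B j))
          (Finset.mem_univ (fun i' : Fin (B j) => t i'))
      _ ≤ B (j + 1) := le_blockFun g j
  -- covers, one per n
  choose σ hσ using fun n => smz_to_cylCover hX (fun k => B (Nat.pair n k + 1))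
  set zs : ℕ → Cantor := diagSeq τf B σ with hzs
  -- truncation
  have htrunc : ∀ j i, ¬ i < B j → zs j i = 0 := by
    intro j i hi
    cases j with
    | zero => rfl
    | succ j => simp only [hzs, diagSeq, if_neg hi]
  -- coherence
  have hcoh : ∀ j i, i < B j → zs (j + 1) i = zs j i := by
    intro j i hi
    have hi' : i < B (j + 1) := lt_of_lt_of_le hi (blockFun_mono g (Nat.le_succ j))
    have : zs (j + 1) i =
        τf (Nat.unpair j).1 (fun i' => if i' < B j then
            zs j i' + σ (Nat.unpair j).1 (Nat.unpair j).2 i' else 0) (B j) i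
          + σ (Nat.unpair j).1 (Nat.unpair j).2 i := by
      simp only [hzs, diagSeq, if_pos hi']
    rw [this, h2 (Nat.unpair j).1 _ (B j) i hi, if_pos hi, add2_cancel]
  have hstab : ∀ j d i, i < B j → zs (j + d) i = zs j i := by
    intro j d
    induction d with
    | zero => intro i _; rfl
    | succ d ih =>
      intro i hi
      have h1' : i < B (j + d) := lt_of_lt_of_le hi (blockFun_mono g (Nat.le_add_right j d))
      rw [show j + (d+1) = (j + d) + 1 by ring, hcoh (j+d) i h1', ih i hi]
  set z : Cantor := fun i => zs (i + 1) i with hz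
  have hzval : ∀ j i, i < B j → z i = zs j i := by
    intro j i hi
    have hi1 : i < B (i + 1) := lt_of_lt_of_le (Nat.lt_succ_self i) (blockFun_le_self g (i+1))
    have e1 : zs ((i+1) + (j + 1)) i = zs (i+1) i := hstab (i+1) (j+1) i hi1
    have e2 : zs (j + (i + 2)) i = zs j i := hstab j (i+2) i hi
    have : (i+1) + (j+1) = j + (i+2) := by ring
    show zs (i + 1) i = zs j i
    rw [← e1, this, e2]
  refine ⟨z, ?_⟩
  intro x hx n
  obtain ⟨k, hk⟩ := Set.mem_iUnion.mp (hσ n hx)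
  set j := Nat.pair n k with hj
  have hunp : Nat.unpair j = (n, k) := Nat.unpair_pair n k
  set t : Cantor := fun i' => if i' < B j then zs j i' + σ n k i' else 0 with ht
  have httr : ∀ i, ¬ i < B j → t i = 0 := fun i hi => by simp only [ht, if_neg hi]
  have hMle : Mf n t (B j) ≤ B (j + 1) := by
    have := hbound j t httr
    rwa [hunp] at this
  -- z + x lies in the forbidden-free cylinder
  have hmem : z + x ∈ cyl (τf n t (B j)) (Mf n t (B j)) := by
    intro i hi
    have hib : i < B (j + 1) := lt_of_lt_of_le hi hMle
    have hxz : x i = σ n k i := hk i hib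
    have hzi : z i = zs (j + 1) i := hzval (j+1) i hib
    have hzs1 : zs (j + 1) i =
        τf (Nat.unpair j).1 (fun i' => if i' < B j then
            zs j i' + σ (Nat.unpair j).1 (Nat.unpair j).2 i' else 0) (B j) i
          + σ (Nat.unpair j).1 (Nat.unpair j).2 i := by
      simp only [hzs, diagSeq, if_pos hib]
    rw [hunp] at hzs1
    have : (z + x) i = z i + x i := rfl
    rw [this, hzi, hzs1, hxz, ht]
    exact add2_cancel _ _
  intro hmemF
  have : z + x ∈ cyl (τf n t (B j)) (Mf n t (B j)) ∩ F n := ⟨hmem, hmemF⟩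
  rw [h3 n t (B j)] at this
  exact this

lemma zmod2_add_eq_zero_iff : ∀ a b : ZMod 2, a + b = 0 ↔ a = b := by decide

lemma mem_coset_iff {y s : Cantor} {X : AddSubgroup Cantor} :
    s ∈ ({y} + (X : Set Cantor)) ↔ y + s ∈ X := by
  constructor
  · rintro ⟨a, ha, b, hb, rfl⟩
    rw [Set.mem_singleton_iff] at ha
    subst ha
    have : a + (a + b) = b := by rw [← add_assoc, cantor_add_self, zero_add]
    rw [this]
    exact hb
  · intro h
    exact ⟨y, rfl, y + s, h, by show y + (y + s) = s; rw [← add_assoc, cantor_add_self, zero_add]⟩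

lemma isMeagre_union {A B : Set Cantor} (hA : IsMeagre A) (hB : IsMeagre B) :
    IsMeagre (A ∪ B) := by
  rw [IsMeagre, Set.compl_union]; exact Filter.inter_mem hA hB

/-- forward direction -/
lemma forward {X : AddSubgroup Cantor} (hX : Dense (X : Set Cantor))
    (hsmz : StrongMeasureZero (X : Set Cantor)) (S : Set Cantor)
    (hsel : ∀ y : Cantor, ∃! s, s ∈ S ∩ ({y} + (X : Set Cantor))) :
    ¬ HasBaireProperty S := by
  rintro ⟨U, hU, hm⟩
  rcases Set.eq_empty_or_nonempty U with hUe | ⟨u, hu⟩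
  · -- S is meager; translate X off a closed-nwd hull of S
    have hS : IsMeagre S := by
      have : symmDiff S U = S := by rw [hUe]; simp [Set.symmDiff_def]
      rwa [this] at hm
    obtain ⟨T, hTnwd, hTc, hTsub⟩ := isMeagre_iff_countable_union_isNowhereDense.mp hS
    have hTc' : (insert (∅ : Set Cantor) T).Countable := hTc.insert _
    have hTne : (insert (∅ : Set Cantor) T).Nonempty := ⟨∅, Set.mem_insert _ _⟩
    obtain ⟨f, hf⟩ := Set.Countable.exists_eq_range hTc' hTne
    set F : ℕ → Set Cantor := fun n => closure (f n) with hF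
    have hFc : ∀ n, IsClosed (F n) := fun n => isClosed_closure
    have hFnwd : ∀ n, interior (F n) = ∅ := by
      intro n
      have hfn : f n ∈ insert (∅ : Set Cantor) T := by rw [hf]; exact ⟨n, rfl⟩
      rcases hfn with he | hT
      · show interior (closure (f n)) = ∅
        rw [he]; simp
      · have := hTnwd _ hT
        rw [IsNowhereDense] at this
        exact this
    obtain ⟨z, hz⟩ := exists_avoid hsmz F hFc hFnwd
    obtain ⟨s, ⟨hsS, hsc⟩, _⟩ := hsel z
    rw [mem_coset_iff] at hsc
    -- s = z + (z + s), and z + s ∈ X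
    have hs' : z + (z + s) = s := by rw [← add_assoc, cantor_add_self, zero_add]
    have hnotS : z + (z + s) ∉ S := by
      intro hmem
      have hsub : S ⊆ ⋃ n, F n := by
        intro w hw
        obtain ⟨t, htT, hwt⟩ := hTsub hw
        have : t ∈ insert (∅ : Set Cantor) T := Set.mem_insert_of_mem _ htT
        rw [hf] at this
        obtain ⟨n, rfl⟩ := this
        exact Set.mem_iUnion.mpr ⟨n, subset_closure hwt⟩
      obtain ⟨n, hn⟩ := Set.mem_iUnion.mp (hsub hmem)
      exact hz (z + s) hsc n hn
    rw [hs'] at hnotS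
    exact hnotS hsS
  · -- U nonempty: comeager on a cylinder, translate within
    obtain ⟨L, hL⟩ := exists_cyl_subset hU hu
    -- find x ∈ X with x↾L = 0, x L = 1
    set v : Cantor := fun i => if i = L then 1 else 0 with hv
    obtain ⟨x, hxX, hxv⟩ := hX.exists_mem_open (isOpen_cyl v (L + 1)) ⟨v, mem_cyl_self v (L+1)⟩
    have hx0 : ∀ i < L, x i = 0 := by
      intro i hi
      have := hxv i (Nat.lt_succ_of_lt hi)
      rw [this, hv]
      simp [Nat.ne_of_lt hi]
    have hxL : x L = 1 := by
      have := hxv L (Nat.lt_succ_self L)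
      rw [this, hv]; simp
    have hxne : x ≠ 0 := by
      intro h0
      rw [h0] at hxL
      exact one_ne_zero hxL.symm
    -- A = cyl u L \ S is meager
    have hA : IsMeagre (cyl u L \ S) := by
      apply hm.mono
      intro w hw
      rw [Set.mem_symmDiff]
      exact Or.inr ⟨hL hw.1, hw.2⟩
    -- B = preimage of A under translation by x
    have hcont : Continuous (fun w : Cantor => w + x) := by
      apply continuous_pi
      intro i
      show Continuous ((fun t : ZMod 2 => t + x i) ∘ (fun a : Cantor => a i))
      exact Continuous.comp continuous_of_discreteTopology (continuous_apply i)
    have hopenmap : IsOpenMap (fun w : Cantor => w + x) := by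
      intro V hV
      have himg : (fun w : Cantor => w + x) '' V = (fun w : Cantor => w + x) ⁻¹' V := by
        ext w
        constructor
        · rintro ⟨w', hw', rfl⟩
          simpa [add_assoc, cantor_add_self] using hw'
        · intro hw
          exact ⟨w + x, hw, by show w + x + x = w; rw [add_assoc, cantor_add_self, add_zero]⟩
      rw [himg]
      exact hV.preimage hcont
    have hB : IsMeagre ((fun w : Cantor => w + x) ⁻¹' (cyl u L \ S)) :=
      hA.preimage_of_isOpenMap hcont hopenmap
    -- cylinder is preserved by the translation
    have hcylpres : ∀ w : Cantor, w + x ∈ cyl u L ↔ w ∈ cyl u L := by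
      intro w
      constructor
      · intro h i hi
        have := h i hi
        rwa [show (w + x) i = w i + x i from rfl, hx0 i hi, add_zero] at this
      · intro h i hi
        rw [show (w + x) i = w i + x i from rfl, hx0 i hi, add_zero]
        exact h i hi
    by_cases hint : ∃ w, w ∈ cyl u L ∧ w ∈ S ∧ w + x ∈ S
    · obtain ⟨w, _, hwS, hwxS⟩ := hint
      -- two distinct points of S in the same coset
      have h1 : w ∈ S ∩ ({w} + (X : Set Cantor)) :=
        ⟨hwS, mem_coset_iff.mpr (by rw [cantor_add_self]; exact X.zero_mem)⟩
      have h2 : w + x ∈ S ∩ ({w} + (X : Set Cantor)) :=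
        ⟨hwxS, mem_coset_iff.mpr (by
          rw [← add_assoc, cantor_add_self, zero_add]; exact hxX)⟩
      obtain ⟨s, _, huniq⟩ := hsel w
      have e1 := huniq w h1
      have e2 := huniq (w + x) h2
      have : w + x = w := e2.trans e1.symm
      apply hxne
      have := congrArg (fun t => w + t) this
      simpa [← add_assoc, cantor_add_self, zero_add, add_zero] using this
    · -- cylinder covered by two meager sets: contradiction
      push_neg at hint
      apply not_isMeagre_of_isOpen' (isOpen_cyl u L) ⟨u, mem_cyl_self u L⟩
      apply (isMeagre_union hA hB).mono
      intro w hw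
      by_cases hwS : w ∈ S
      · right
        show w + x ∈ cyl u L \ S
        exact ⟨(hcylpres w).mpr hw, fun hc => hint w hw hwS hc⟩
      · left; exact ⟨hw, hwS⟩

lemma zmod2_ne_iff : ∀ a b : ZMod 2, a + b ≠ 0 ↔ a ≠ b := by decide

lemma backward {X : AddSubgroup Cantor}
    (h : ∀ S : Set Cantor,
      (∀ y : Cantor, ∃! s, s ∈ S ∩ ({y} + (X : Set Cantor))) → ¬ HasBaireProperty S) :
    StrongMeasureZero (X : Set Cantor) := by
  classical
  apply smz_of_blocks
  intro b hb
  by_contra hno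
  push_neg at hno
  -- hno : ∀ z, ∃ x ∈ X, ∀ j, ∃ i, b j ≤ i ∧ i < b (j+1) ∧ x i ≠ z i
  have hbmono : StrictMono b := strictMono_nat_of_lt_succ hb
  -- the meager set M
  set C : ℕ → Set Cantor := fun N =>
    {w | ∀ j, N ≤ j → ∃ i, b j ≤ i ∧ i < b (j + 1) ∧ w i ≠ 0} with hC
  set M : Set Cantor := ⋃ N, C N with hM
  have hCclosed : ∀ N, IsClosed (C N) := by
    intro N
    have : C N = ⋂ j, {w : Cantor | N ≤ j → ∃ i, b j ≤ i ∧ i < b (j + 1) ∧ w i ≠ 0} := by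
      ext w; simp [hC, Set.mem_iInter]
    rw [this]
    apply isClosed_iInter
    intro j
    by_cases hNj : N ≤ j
    · have : {w : Cantor | N ≤ j → ∃ i, b j ≤ i ∧ i < b (j + 1) ∧ w i ≠ 0}
          = ⋃ i ∈ Finset.Ico (b j) (b (j + 1)), {w : Cantor | w i ≠ 0} := by
        ext w
        simp [hNj]
        constructor
        · rintro ⟨i, h1, h2, h3⟩; exact ⟨i, ⟨h1, h2⟩, h3⟩
        · rintro ⟨i, ⟨h1, h2⟩, h3⟩; exact ⟨i, h1, h2, h3⟩
      rw [this]
      apply Set.Finite.isClosed_biUnion (Finset.finite_toSet _)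
      intro i _
      have : {w : Cantor | w i ≠ 0} = (fun w : Cantor => w i) ⁻¹' {(0 : ZMod 2)}ᶜ := rfl
      rw [this]
      exact IsClosed.preimage (continuous_apply i) (isClosed_discrete _)
    · have : {w : Cantor | N ≤ j → ∃ i, b j ≤ i ∧ i < b (j + 1) ∧ w i ≠ 0} = Set.univ := by
        ext w; simp [hNj]
      rw [this]
      exact isClosed_univ
  have hCnwd : ∀ N, interior (C N) = ∅ := by
    intro N
    rw [Set.eq_empty_iff_forall_notMem]
    intro u hu
    obtain ⟨L, hL⟩ := exists_cyl_subset isOpen_interior hu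
    set j := max N L with hj
    have hbjL : L ≤ b j := le_trans (le_max_right N L) (hbmono.le_apply)
    set w : Cantor := fun i => if i < b j then u i else 0 with hw
    have hwcyl : w ∈ cyl u L := by
      intro i hi
      simp only [hw]
      rw [if_pos (lt_of_lt_of_le hi hbjL)]
    have hwC : w ∈ C N := interior_subset (hL hwcyl)
    obtain ⟨i, hi1, hi2, hi3⟩ := hwC j (le_max_left N L)
    apply hi3
    simp only [hw]
    rw [if_neg (Nat.not_lt.mpr hi1)]
  have hMmeagre : IsMeagre M := by
    apply isMeagre_iff_countable_union_isNowhereDense.mpr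
    refine ⟨Set.range C, ?_, Set.countable_range C, ?_⟩
    · rintro t ⟨N, rfl⟩
      rw [IsNowhereDense, (hCclosed N).closure_eq]
      exact hCnwd N
    · rw [Set.sUnion_range]
  -- every coset meets M
  have hcoset : ∀ y : Cantor, ∃ w, w ∈ M ∧ y + w ∈ X := by
    intro y
    obtain ⟨x, hxX, hx⟩ := hno y
    refine ⟨y + x, ?_, ?_⟩
    · refine Set.mem_iUnion.mpr ⟨0, ?_⟩
      intro j _
      obtain ⟨i, h1, h2, h3⟩ := hx j
      refine ⟨i, h1, h2, ?_⟩
      show y i + x i ≠ 0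
      rw [show y i + x i = x i + y i from add_comm _ _]
      exact (zmod2_ne_iff (x i) (y i)).mpr h3
    · have : y + (y + x) = x := by rw [← add_assoc, cantor_add_self, zero_add]
      rw [this]
      exact hxX
  -- choose a selector inside M
  have hq : ∀ q : Cantor ⧸ X, ∃ w, w ∈ M ∧ QuotientAddGroup.mk w = q := by
    intro q
    induction q using QuotientAddGroup.induction_on with
    | H y =>
      obtain ⟨w, hwM, hwX⟩ := hcoset y
      refine ⟨w, hwM, ?_⟩
      rw [QuotientAddGroup.eq]
      rw [cantor_neg]
      rwa [add_comm]
  choose f hfM hfq using hq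
  set S : Set Cantor := Set.range f with hS
  have hsel : ∀ y : Cantor, ∃! s, s ∈ S ∩ ({y} + (X : Set Cantor)) := by
    intro y
    refine ⟨f (QuotientAddGroup.mk y), ⟨⟨_, rfl⟩, ?_⟩, ?_⟩
    · rw [mem_coset_iff]
      have h2 := hfq (QuotientAddGroup.mk y)
      rw [QuotientAddGroup.eq, cantor_neg] at h2
      rwa [add_comm] at h2
    · rintro s' ⟨⟨q', rfl⟩, hmem⟩
      rw [mem_coset_iff] at hmem
      have h1 : (QuotientAddGroup.mk (f q') : Cantor ⧸ X) = QuotientAddGroup.mk y := by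
        rw [QuotientAddGroup.eq, cantor_neg, add_comm]
        exact hmem
      rw [hfq q'] at h1
      rw [h1]
  have hBP : HasBaireProperty S := by
    refine ⟨∅, isOpen_empty, ?_⟩
    have : symmDiff S (∅ : Set Cantor) = S := by simp [Set.symmDiff_def]
    rw [this]
    apply hMmeagre.mono
    rintro s ⟨q, rfl⟩
    exact hfM q
  exact h S hsel hBP

/-- (Reclaw) For a dense subgroup `X` of `(2^ω, +)`: `X` has strong measure zero iff
every selector of the cosets of `X` does not have the Baire property. -/
theorem strongMeasureZero_iff_selectors_without_baire_property
    (X : AddSubgroup Cantor) (hX : Dense (X : Set Cantor)) :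
    StrongMeasureZero (X : Set Cantor) ↔
      ∀ S : Set Cantor,
        (∀ y : Cantor, ∃! s, s ∈ S ∩ ({y} + (X : Set Cantor))) →
        ¬ HasBaireProperty S := by
  constructor
  · intro hsmz S hsel
    exact forward hX hsmz S hsel
  · intro h
    exact backward h
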